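/- arXiv:2004.08380 — 3 statements merged into one kernel-verified Lean document; each statement's English description precedes it below -/
import Mathlib

section
/- If P : 𝒲 → 𝒱 is a Grothendieck fibration and 𝒜 is any category, then the post-composition functor P^𝒜 : 𝒲^𝒜 → 𝒱^𝒜 between functor categories is again a Grothendieck fibration, with cartesian liftings computed pointwise. -/
open CategoryTheory

/-- `P` is a (Grothendieck) fibration: every `j : X → P(𝕐)` has a cartesian
lifting `𝕛 : 𝕏 → 𝕐` with `P 𝕛 = j`. -/
def IsFibrationP {W : Type*} {V : Type*} [Category W] [Category V] (P : W ⥤ V) : Prop :=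
  ∀ (Y : W) (X : V) (j : X ⟶ P.obj Y),
    ∃ (Xb : W) (jb : Xb ⟶ Y) (h : P.obj Xb = X),
      P.map jb = eqToHom h ≫ j ∧
      ∀ (Wb : W) (k : Wb ⟶ Y) (hh : P.obj Wb ⟶ X),
        P.map k = hh ≫ j →
          ∃! hb : Wb ⟶ Xb, hb ≫ jb = k ∧ P.map hb ≫ eqToHom h = hh

/-- If `P : 𝒲 → 𝒱` is a Grothendieck fibration and `𝒜` is any
category, then post-composition `P^𝒜 : 𝒲^𝒜 → 𝒱^𝒜` is again a Grothendieck
fibration. -/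
theorem stmt9 {W V A : Type*} [Category W] [Category V] [Category A]
    (P : W ⥤ V) (hP : IsFibrationP P) :
    IsFibrationP ((Functor.whiskeringRight A W V).obj P) := by
  intro Y X j
  choose Xb jb h heq huniv using fun a => hP (Y.obj a) (X.obj a) (j.app a)
  -- admissibility of the candidate for the map of the lifted functor
  have key : ∀ {a b : A} (f : a ⟶ b),
      P.map (jb a ≫ Y.map f) = (eqToHom (h a) ≫ X.map f) ≫ j.app b := by
    intro a b f
    have hnat : X.map f ≫ j.app b = j.app a ≫ P.map (Y.map f) := j.naturality f
    rw [P.map_comp, heq a, Category.assoc, Category.assoc, ← hnat]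
  -- the map of the lifted functor, packaged with its defining properties
  let Fmap : ∀ {a b : A} (f : a ⟶ b),
      { g : Xb a ⟶ Xb b // g ≫ jb b = jb a ≫ Y.map f ∧
        P.map g ≫ eqToHom (h b) = eqToHom (h a) ≫ X.map f } :=
    fun {a b} f => ⟨(huniv b (Xb a) (jb a ≫ Y.map f) (eqToHom (h a) ≫ X.map f) (key f)).choose,
      (huniv b (Xb a) (jb a ≫ Y.map f) (eqToHom (h a) ≫ X.map f) (key f)).choose_spec.1⟩
  have Funiq : ∀ {a b : A} (f : a ⟶ b) (g : Xb a ⟶ Xb b),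
      g ≫ jb b = jb a ≫ Y.map f → P.map g ≫ eqToHom (h b) = eqToHom (h a) ≫ X.map f →
      g = (Fmap f).1 :=
    fun {a b} f g h1 h2 =>
      (huniv b (Xb a) (jb a ≫ Y.map f) (eqToHom (h a) ≫ X.map f) (key f)).choose_spec.2 g ⟨h1, h2⟩
  -- the lifted functor
  let F : A ⥤ W :=
    { obj := Xb
      map := fun f => (Fmap f).1
      map_id := by
        intro a
        refine (Funiq (𝟙 a) (𝟙 (Xb a)) ?_ ?_).symm
        · simp
        · simp
      map_comp := by
        intro a b c f g
        refine (Funiq (f ≫ g) ((Fmap f).1 ≫ (Fmap g).1) ?_ ?_).symm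
        · rw [Category.assoc, (Fmap g).2.1, ← Category.assoc, (Fmap f).2.1,
            Category.assoc, Y.map_comp]
        · rw [P.map_comp, Category.assoc, (Fmap g).2.2, ← Category.assoc, (Fmap f).2.2,
            Category.assoc, X.map_comp] }
  -- the lifted natural transformation
  let jbn : F ⟶ Y := { app := jb, naturality := fun a b f => (Fmap f).2.1 }
  have hF : F ⋙ P = X := by
    refine CategoryTheory.Functor.ext (fun a => h a) ?_
    intro a b f
    have hm := (Fmap f).2.2
    rw [Functor.comp_map, ← Category.assoc, ← hm, Category.assoc, eqToHom_trans,
      eqToHom_refl, Category.comp_id]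
  refine ⟨F, jbn, hF, ?_, ?_⟩
  · ext a
    have : (eqToHom hF).app a = eqToHom (h a) := by
      simp [eqToHom_app]
    simp only [NatTrans.comp_app, this]
    simpa using heq a
  · intro G k hh hcond
    have hcond' : ∀ a, P.map (k.app a) = hh.app a ≫ j.app a := by
      intro a
      have := congr_arg (fun t => NatTrans.app t a) hcond
      simpa using this
    -- pointwise lifts
    let lmap : ∀ a : A, { g : G.obj a ⟶ Xb a //
        g ≫ jb a = k.app a ∧ P.map g ≫ eqToHom (h a) = hh.app a } :=
      fun a => ⟨(huniv a (G.obj a) (k.app a) (hh.app a) (hcond' a)).choose,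
        (huniv a (G.obj a) (k.app a) (hh.app a) (hcond' a)).choose_spec.1⟩
    have luniq : ∀ (a : A) (g : G.obj a ⟶ Xb a),
        g ≫ jb a = k.app a → P.map g ≫ eqToHom (h a) = hh.app a → g = (lmap a).1 :=
      fun a g h1 h2 =>
        (huniv a (G.obj a) (k.app a) (hh.app a) (hcond' a)).choose_spec.2 g ⟨h1, h2⟩
    have lnat : ∀ {a b : A} (f : a ⟶ b),
        G.map f ≫ (lmap b).1 = (lmap a).1 ≫ (Fmap f).1 := by
      intro a b f
      have keyb : P.map (G.map f ≫ k.app b) =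
          (P.map (G.map f) ≫ hh.app b) ≫ j.app b := by
        rw [P.map_comp, hcond' b, Category.assoc]
      have e1 : G.map f ≫ (lmap b).1 =
          (huniv b (G.obj a) (G.map f ≫ k.app b) (P.map (G.map f) ≫ hh.app b)
            keyb).choose := by
        refine (huniv b _ _ _ keyb).choose_spec.2 _ ⟨?_, ?_⟩
        · rw [Category.assoc, (lmap b).2.1]
        · rw [P.map_comp, Category.assoc, (lmap b).2.2]
      have e2 : (lmap a).1 ≫ (Fmap f).1 =
          (huniv b (G.obj a) (G.map f ≫ k.app b) (P.map (G.map f) ≫ hh.app b)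
            keyb).choose := by
        refine (huniv b _ _ _ keyb).choose_spec.2 _ ⟨?_, ?_⟩
        · rw [Category.assoc, (Fmap f).2.1, ← Category.assoc, (lmap a).2.1, k.naturality]
        · have hnat : P.map (G.map f) ≫ hh.app b = hh.app a ≫ X.map f := hh.naturality f
          rw [P.map_comp, Category.assoc, (Fmap f).2.2, ← Category.assoc, (lmap a).2.2, hnat]
      rw [e1, e2]
    refine ⟨{ app := fun a => (lmap a).1, naturality := fun a b f => lnat f }, ⟨?_, ?_⟩, ?_⟩
    · ext a
      exact (lmap a).2.1
    · ext a
      have : (eqToHom hF).app a = eqToHom (h a) := by simp [eqToHom_app]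
      simp only [NatTrans.comp_app, this]
      simpa using (lmap a).2.2
    · intro t ⟨ht1, ht2⟩
      ext a
      refine luniq a (t.app a) ?_ ?_
      · exact congr_arg (fun s => NatTrans.app s a) ht1
      · have := congr_arg (fun s => NatTrans.app s a) ht2
        have e : (eqToHom hF).app a = eqToHom (h a) := by simp [eqToHom_app]
        simpa [e] using this
end

section
/- In any nominal monoidal theory, the equations of Figures 'permutation actions' and 'δ' entail that for every term t : A → B and every finite permutation π, π·t = π_A⁻¹ ; t ; π_B, where π_A = ⨄_{a∈A} δ_{a,π(a)}. -/
open MulAction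

/-- Names -/
abbrev Name := ℕ

/-- The group of finite (finitely supported) permutations of names. -/
def FinPerm : Subgroup (Equiv.Perm Name) where
  carrier := {π | {a | π a ≠ a}.Finite}
  one_mem' := by simp
  mul_mem' := by
    intro π σ hπ hσ
    apply (hπ.union hσ).subset
    intro a ha
    by_contra h
    simp only [Set.mem_union, Set.mem_setOf_eq, not_or, not_not] at h
    exact ha (by simp [Equiv.Perm.mul_apply, h.1, h.2])
  inv_mem' := by
    intro π hπ
    apply (hπ.image π).subset
    intro a ha
    exact ⟨π⁻¹ a, by simpa using (Ne.symm ha), by simp⟩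

noncomputable instance : SMul FinPerm Name := ⟨fun π a => π.1 a⟩

noncomputable instance : MulAction FinPerm Name where
  one_smul a := rfl
  mul_smul π σ a := rfl

/-- A nominal set: an action of the finite permutations in which every element
has a finite support. -/
class NominalSet (α : Type*) extends MulAction FinPerm α where
  finSupp : ∀ x : α, ∃ S : Finset Name, Supports FinPerm (↑S : Set Name) x

/-- The least support of an element (intersection of all supporting sets). -/
def supp {α : Type*} [MulAction FinPerm α] (x : α) : Set Name :=
  ⋂₀ {S : Set Name | Supports FinPerm S x}

open Pointwise

/-- A signature of generators for a nominal monoidal theory. -/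
structure NSig where
  gen : Type
  ar : gen → ℕ
  car : gen → ℕ

/-- Terms of a nominal monoidal theory: generators `[a⟩γ⟨b]`, identities
`id_a`, renamings `δ_{ab}`, the empty term `id_∅`, tensor, sequential
composition, and the permutation action. -/
inductive NTrm (S : NSig) : Type
  | gen : S.gen → List Name → List Name → NTrm S
  | idt : Name → NTrm S
  | delta : Name → Name → NTrm S
  | unit : NTrm S
  | tens : NTrm S → NTrm S → NTrm S
  | seq : NTrm S → NTrm S → NTrm S
  | pact : FinPerm → NTrm S → NTrm S

namespace NTrm

variable {S : NSig}

noncomputable def dom : NTrm S → Finset Name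
  | .gen _ a _ => a.toFinset
  | .idt a => {a}
  | .delta a _ => {a}
  | .unit => ∅
  | .tens s t => s.dom ∪ t.dom
  | .seq s _ => s.dom
  | .pact π t => π • t.dom

noncomputable def cod : NTrm S → Finset Name
  | .gen _ _ b => b.toFinset
  | .idt a => {a}
  | .delta _ b => {b}
  | .unit => ∅
  | .tens s t => s.cod ∪ t.cod
  | .seq _ t => t.cod
  | .pact π t => π • t.cod

/-- Well-formedness of a term. -/
def WF : NTrm S → Prop
  | .gen γ a b => a.Nodup ∧ b.Nodup ∧ a.length = S.ar γ ∧ b.length = S.car γ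
  | .idt _ => True
  | .delta _ _ => True
  | .unit => True
  | .tens s t => s.WF ∧ t.WF ∧ Disjoint s.dom t.dom ∧ Disjoint s.cod t.cod
  | .seq s t => s.WF ∧ t.WF ∧ s.cod = t.dom
  | .pact _ t => t.WF

end NTrm

/-- The identity term on a finite set of names. -/
noncomputable def idOf {S : NSig} (A : Finset Name) : NTrm S :=
  (A.toList.map NTrm.idt).foldr NTrm.tens NTrm.unit

/-- The disjoint union of renamings `⨄ δ_{aᵢbᵢ}` given by a list of pairs. -/
def renOf {S : NSig} (l : List (Name × Name)) : NTrm S :=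
  (l.map fun p => NTrm.delta p.1 p.2).foldr NTrm.tens NTrm.unit

/-- The renaming term `π_A = ⨄_{a∈A} δ_{a,π(a)} : A → π[A]`. -/
noncomputable def permTermOf {S : NSig} (π : FinPerm) (A : Finset Name) : NTrm S :=
  renOf (A.toList.map fun a => (a, π • a))

/-- The renaming term `π_A⁻¹ = ⨄_{a∈A} δ_{π(a),a} : π[A] → A`. -/
noncomputable def permTermInv {S : NSig} (π : FinPerm) (A : Finset Name) : NTrm S :=
  renOf (A.toList.map fun a => (π • a, a))

/-- Equality of terms of a nominal monoidal theory: the congruence generated by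
the extra equations `E` together with the NMT base equations (category laws,
commutative-monoid laws for `⊎`, interchange, the permutation-action equations
and the `δ`-equations, including NMT-left and NMT-right). -/
inductive NEq (S : NSig) (E : NTrm S → NTrm S → Prop) : NTrm S → NTrm S → Prop
  | base {s t} : E s t → NEq S E s t
  | refl (t) : NEq S E t t
  | symm {s t} : NEq S E s t → NEq S E t s
  | trans {s t u} : NEq S E s t → NEq S E t u → NEq S E s u
  | congr_tens {s s' t t'} : NEq S E s s' → NEq S E t t' →
      NEq S E (.tens s t) (.tens s' t')
  | congr_seq {s s' t t'} : NEq S E s s' → NEq S E t t' →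
      NEq S E (.seq s t) (.seq s' t')
  | congr_pact (π) {s t} : NEq S E s t → NEq S E (.pact π s) (.pact π t)
  -- category laws
  | seq_id_left (t : NTrm S) : NEq S E (.seq (idOf t.dom) t) t
  | seq_id_right (t : NTrm S) : NEq S E (.seq t (idOf t.cod)) t
  | seq_assoc (s t u) : NEq S E (.seq (.seq s t) u) (.seq s (.seq t u))
  -- commutative monoid laws for the tensor, with unit `id_∅`
  | tens_comm (s t) : NEq S E (.tens s t) (.tens t s)
  | tens_assoc (s t u) : NEq S E (.tens (.tens s t) u) (.tens s (.tens t u))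
  | tens_unit_left (t) : NEq S E (.tens .unit t) t
  | tens_unit_right (t) : NEq S E (.tens t .unit) t
  -- interchange (NMT-ch)
  | interchange (s t u v) :
      NEq S E (.seq (.tens s u) (.tens t v)) (.tens (.seq s t) (.seq u v))
  -- permutation-action equations
  | pact_idt (π a) : NEq S E (.pact π (.idt a)) (.idt (π • a))
  | pact_delta (π a b) : NEq S E (.pact π (.delta a b)) (.delta (π • a) (π • b))
  | pact_gen (π γ a b) :
      NEq S E (.pact π (.gen γ a b)) (.gen γ (a.map (π • ·)) (b.map (π • ·)))
  | pact_unit (π) : NEq S E (.pact π .unit) .unit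
  | pact_tens (π s t) : NEq S E (.pact π (.tens s t)) (.tens (.pact π s) (.pact π t))
  | pact_seq (π s t) : NEq S E (.pact π (.seq s t)) (.seq (.pact π s) (.pact π t))
  | pact_one (t) : NEq S E (.pact 1 t) t
  | pact_mul (π σ t) : NEq S E (.pact (π * σ) t) (.pact π (.pact σ t))
  -- δ-equations
  | delta_id (a) : NEq S E (.delta a a) (.idt a)
  | delta_comp (a b c) : NEq S E (.seq (.delta a b) (.delta b c)) (.delta a c)
  -- NMT-left
  | nmt_left (γ : S.gen) (a b : List Name) (i : ℕ) (hi : i < a.length) (x : Name)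
      (hx : x ∉ a) :
      NEq S E
        (.seq (.tens (.delta x (a.getD i 0)) (idOf (a.toFinset.erase (a.getD i 0))))
          (.gen γ a b))
        (.gen γ (a.set i x) b)
  -- NMT-right
  | nmt_right (γ : S.gen) (a b : List Name) (i : ℕ) (hi : i < b.length) (x : Name)
      (hx : x ∉ b) :
      NEq S E
        (.seq (.gen γ a b)
          (.tens (idOf (b.toFinset.erase (b.getD i 0))) (.delta (b.getD i 0) x)))
        (.gen γ a (b.set i x))

/-- The base nominal monoidal theory (no extra equations). -/
def NEq₀ (S : NSig) : NTrm S → NTrm S → Prop := NEq S fun _ _ => False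

/-- `X` supports the `α`-equivalence class of a term `t`. -/
def TSupports (S : NSig) (X : Set Name) (t : NTrm S) : Prop :=
  ∀ π : FinPerm, (∀ a ∈ X, π • a = a) → NEq₀ S (.pact π t) t

/-- The minimal support of the equivalence class of a term. -/
def msupp (S : NSig) (t : NTrm S) : Set Name :=
  ⋂₀ {X : Set Name | TSupports S X t}

section Aux

variable {S : NSig}

open NTrm

/-! ### Basic facts about `renOf` -/

theorem renOf_nil' : (renOf [] : NTrm S) = .unit := rfl

theorem renOf_cons' (p : Name × Name) (l : List (Name × Name)) :
    (renOf (p :: l) : NTrm S) = .tens (.delta p.1 p.2) (renOf l) := rfl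

theorem idOf_empty : (idOf ∅ : NTrm S) = .unit := by simp [idOf]

theorem seq_unit_unit : NEq₀ S (.seq .unit .unit) .unit := by
  have h : NEq₀ S (.seq (idOf (NTrm.unit : NTrm S).dom) .unit) .unit :=
    NEq.seq_id_left _
  simpa [NTrm.dom, idOf_empty] using h

theorem renOf_append (l₁ l₂ : List (Name × Name)) :
    NEq₀ S (renOf (l₁ ++ l₂)) (.tens (renOf l₁) (renOf l₂)) := by
  induction l₁ with
  | nil => exact NEq.symm (NEq.tens_unit_left _)
  | cons p l ih =>
      exact NEq.trans (NEq.congr_tens (NEq.refl _) ih) (NEq.symm (NEq.tens_assoc _ _ _))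

theorem renOf_perm {l l' : List (Name × Name)} (h : l.Perm l') :
    NEq₀ S (renOf l) (renOf l') := by
  induction h with
  | nil => exact NEq.refl _
  | cons p _ ih => exact NEq.congr_tens (NEq.refl _) ih
  | swap p q l =>
      exact NEq.trans (NEq.symm (NEq.tens_assoc _ _ _))
        (NEq.trans (NEq.congr_tens (NEq.tens_comm _ _) (NEq.refl _)) (NEq.tens_assoc _ _ _))
  | trans _ _ ih1 ih2 => exact NEq.trans ih1 ih2

theorem renOf_comp (l : List Name) : ∀ (m n : List Name), l.length = m.length →
    m.length = n.length →
    NEq₀ S (.seq (renOf (l.zip m)) (renOf (m.zip n))) (renOf (l.zip n)) := by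
  induction l with
  | nil =>
      intro m n h1 h2
      cases m with
      | nil =>
          cases n with
          | nil => exact seq_unit_unit
          | cons c n => simp at h2
      | cons b m => simp at h1
  | cons a l ih =>
      intro m n h1 h2
      cases m with
      | nil => simp at h1
      | cons b m =>
          cases n with
          | nil => simp at h2
          | cons c n =>
              exact NEq.trans (NEq.interchange _ _ _ _)
                (NEq.congr_tens (NEq.delta_comp a b c)
                  (ih m n (by simpa using h1) (by simpa using h2)))

/-! ### List computations -/

theorem zip_self_eq_map (l : List Name) : l.zip l = l.map (fun a => (a, a)) := by
  induction l with
  | nil => rfl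
  | cons a l ih => simp [ih]

theorem map_pair_zip (f g : Name → Name) (l : List Name) :
    l.map (fun a => (f a, g a)) = (l.map f).zip (l.map g) := by
  induction l with
  | nil => rfl
  | cons a l ih => simp [ih]

theorem map_pair_eq_zip (f : Name → Name) (l : List Name) :
    l.map (fun a => (f a, a)) = (l.map f).zip l := by
  have := map_pair_zip f id l
  simpa using this

theorem map_pair_eq_zip' (f : Name → Name) (l : List Name) :
    l.map (fun a => (a, f a)) = l.zip (l.map f) := by
  have := map_pair_zip id f l
  simpa using this

theorem renOf_dup (l : List Name) :
    NEq₀ S (renOf (l.map fun a => (a, a))) ((l.map NTrm.idt).foldr .tens .unit) := by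
  induction l with
  | nil => exact NEq.refl _
  | cons a l ih => exact NEq.congr_tens (NEq.delta_id a) ih

theorem renOf_dup_idOf {l : List Name} (h : l.Nodup) :
    NEq₀ S (renOf (l.map fun a => (a, a))) (idOf l.toFinset) := by
  have hp : l.toFinset.toList.Perm l := List.toFinset_toList h
  exact NEq.trans (renOf_perm ((hp.map _).symm)) (renOf_dup _)

theorem renOf_zip_self_idOf {l : List Name} (h : l.Nodup) :
    NEq₀ S (renOf (l.zip l)) (idOf l.toFinset) := by
  rw [zip_self_eq_map]; exact renOf_dup_idOf h

/-! ### Fresh names -/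

theorem mem_le_foldr_max (l : List Name) : ∀ x ∈ l, x ≤ l.foldr max 0 := by
  induction l with
  | nil => intro x hx; simp at hx
  | cons a l ih =>
      intro x hx
      rcases List.mem_cons.1 hx with rfl | hx
      · exact le_max_left _ _
      · exact le_trans (ih x hx) (le_max_right _ _)

theorem exists_fresh (n : ℕ) (avoid : List Name) :
    ∃ y : List Name, y.length = n ∧ y.Nodup ∧ ∀ x ∈ y, x ∉ avoid := by
  refine ⟨(List.range n).map (· + (avoid.foldr max 0 + 1)), by simp, ?_, ?_⟩
  · exact (List.nodup_range (n := n)).map (add_left_injective _)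
  · intro x hx hmem
    simp only [List.mem_map, List.mem_range] at hx
    obtain ⟨k, -, hk⟩ := hx
    have h1 := mem_le_foldr_max avoid x hmem
    have h2 : avoid.foldr max 0 + 1 ≤ x := hk ▸ Nat.le_add_left _ _
    exact Nat.not_succ_le_self _ (le_trans h2 h1)

/-! ### eraseIdx facts -/

theorem mem_eraseIdx_of_nodup : ∀ (c : List Name), c.Nodup → ∀ (i : ℕ), i < c.length →
    ∀ x, (x ∈ c.eraseIdx i ↔ x ∈ c ∧ x ≠ c.getD i 0) := by
  intro c
  induction c with
  | nil => intro _ i hi; simp at hi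
  | cons a c ih =>
      intro hnd i hi x
      have ha : a ∉ c := (List.nodup_cons.1 hnd).1
      have hc : c.Nodup := (List.nodup_cons.1 hnd).2
      cases i with
      | zero =>
          simp only [List.eraseIdx, List.getD_cons_zero, List.mem_cons]
          constructor
          · intro hx
            exact ⟨Or.inr hx, fun h => ha (h ▸ hx)⟩
          · rintro ⟨hx | hx, hne⟩
            · exact absurd hx hne
            · exact hx
      | succ i =>
          have hi' : i < c.length := by simpa using hi
          simp only [List.eraseIdx, List.getD_cons_succ, List.mem_cons, ih hc i hi' x]
          have hgd : c.getD i 0 ∈ c := by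
            rw [List.getD_eq_getElem c 0 hi']; exact c.getElem_mem hi'
          constructor
          · rintro (rfl | ⟨hx, hne⟩)
            · exact ⟨Or.inl rfl, fun h => ha (h ▸ hgd)⟩
            · exact ⟨Or.inr hx, hne⟩
          · rintro ⟨rfl | hx, hne⟩
            · exact Or.inl rfl
            · exact Or.inr ⟨hx, hne⟩

theorem eraseIdx_toFinset {c : List Name} (hc : c.Nodup) {i : ℕ} (hi : i < c.length) :
    (c.eraseIdx i).toFinset = c.toFinset.erase (c.getD i 0) := by
  ext x
  simp [Finset.mem_erase, mem_eraseIdx_of_nodup c hc i hi x, and_comm]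

theorem set_zip_perm (x : Name) : ∀ (c : List Name) (i : ℕ), i < c.length →
    ((c.set i x).zip c).Perm ((x, c.getD i 0) :: ((c.eraseIdx i).map fun a => (a, a))) := by
  intro c
  induction c with
  | nil => intro i hi; simp at hi
  | cons a c ih =>
      intro i hi
      cases i with
      | zero => simp [zip_self_eq_map]
      | succ i =>
          have hi' : i < c.length := by simpa using hi
          have h1 := (ih i hi').cons (a, a)
          simp only [List.zip_cons_cons, List.getD_cons_succ,
            List.eraseIdx_cons_succ, List.map_cons] at *
          exact h1.trans (List.Perm.swap _ _ _)

theorem zip_set_perm (x : Name) : ∀ (c : List Name) (i : ℕ), i < c.length →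
    (c.zip (c.set i x)).Perm ((c.getD i 0, x) :: ((c.eraseIdx i).map fun a => (a, a))) := by
  intro c
  induction c with
  | nil => intro i hi; simp at hi
  | cons a c ih =>
      intro i hi
      cases i with
      | zero => simp [zip_self_eq_map]
      | succ i =>
          have hi' : i < c.length := by simpa using hi
          have h1 := (ih i hi').cons (a, a)
          simp only [List.zip_cons_cons, List.getD_cons_succ,
            List.eraseIdx_cons_succ, List.map_cons] at *
          exact h1.trans (List.Perm.swap _ _ _)

/-! ### Single renaming steps into generators -/

theorem stepL (γ : S.gen) (b : List Name) (c : List Name) (hc : c.Nodup) (i : ℕ)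
    (hi : i < c.length) (x : Name) (hx : x ∉ c) :
    NEq₀ S (.seq (renOf ((c.set i x).zip c)) (.gen γ c b)) (.gen γ (c.set i x) b) := by
  have hnd : (c.eraseIdx i).Nodup := (List.eraseIdx_sublist c i).nodup hc
  have h1 : NEq₀ S (renOf ((c.set i x).zip c))
      (.tens (.delta x (c.getD i 0)) (idOf (c.toFinset.erase (c.getD i 0)))) := by
    refine NEq.trans (renOf_perm (set_zip_perm x c i hi)) ?_
    refine NEq.congr_tens (NEq.refl _) ?_
    rw [← eraseIdx_toFinset hc hi]
    exact renOf_dup_idOf hnd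
  exact NEq.trans (NEq.congr_seq h1 (NEq.refl _)) (NEq.nmt_left γ c b i hi x hx)

theorem stepR (γ : S.gen) (a : List Name) (c : List Name) (hc : c.Nodup) (i : ℕ)
    (hi : i < c.length) (x : Name) (hx : x ∉ c) :
    NEq₀ S (.seq (.gen γ a c) (renOf (c.zip (c.set i x)))) (.gen γ a (c.set i x)) := by
  have hnd : (c.eraseIdx i).Nodup := (List.eraseIdx_sublist c i).nodup hc
  have h1 : NEq₀ S (renOf (c.zip (c.set i x)))
      (.tens (idOf (c.toFinset.erase (c.getD i 0))) (.delta (c.getD i 0) x)) := by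
    refine NEq.trans (renOf_perm (zip_set_perm x c i hi)) ?_
    refine NEq.trans (NEq.congr_tens (NEq.refl _) ?_) (NEq.tens_comm _ _)
    rw [← eraseIdx_toFinset hc hi]
    exact renOf_dup_idOf hnd
  exact NEq.trans (NEq.congr_seq (NEq.refl _) h1) (NEq.nmt_right γ a c i hi x hx)

theorem set_append_len (p : List Name) (a0 y0 : Name) (a' : List Name) :
    (p ++ a0 :: a').set p.length y0 = p ++ y0 :: a' := by
  induction p with
  | nil => rfl
  | cons q p ih => simp [ih]

/-! ### Renaming chains into generators -/

theorem genL (γ : S.gen) (b : List Name) :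
    ∀ (yr ar p : List Name), yr.length = ar.length → (p ++ (yr ++ ar)).Nodup →
    NEq₀ S (.seq (renOf ((p ++ yr).zip (p ++ ar))) (.gen γ (p ++ ar) b))
      (.gen γ (p ++ yr) b) := by
  intro yr
  induction yr with
  | nil =>
      intro ar p hlen hnd
      cases ar with
      | cons a0 a' => simp at hlen
      | nil =>
          simp only [List.append_nil]
          have hp : p.Nodup := by simpa using hnd
          exact NEq.trans (NEq.congr_seq (renOf_zip_self_idOf hp) (NEq.refl _))
            (NEq.seq_id_left (.gen γ p b))
  | cons y0 y' ih =>
      intro ar p hlen hnd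
      cases ar with
      | nil => simp at hlen
      | cons a0 a' =>
          have hlen' : y'.length = a'.length := by simpa using hlen
          have hnd2 : (y0 :: (p ++ (y' ++ a0 :: a'))).Nodup :=
            (List.perm_middle (a := y0) (l₁ := p) (l₂ := y' ++ a0 :: a')).nodup_iff.mp hnd
          have hy0all : y0 ∉ p ++ (y' ++ a0 :: a') := (List.nodup_cons.1 hnd2).1
          have hndrest : (p ++ (y' ++ a0 :: a')).Nodup := (List.nodup_cons.1 hnd2).2
          have hsubN : (p ++ a0 :: a').Sublist (p ++ (y' ++ a0 :: a')) :=
            (List.sublist_append_right y' (a0 :: a')).append_left p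
          have hndN : (p ++ a0 :: a').Nodup := hsubN.nodup hndrest
          have hy0N : y0 ∉ p ++ a0 :: a' := fun hm => hy0all (hsubN.subset hm)
          have hi : p.length < (p ++ a0 :: a').length := by simp
          have hstep := stepL γ b (p ++ a0 :: a') hndN p.length hi y0 hy0N
          rw [set_append_len] at hstep
          have hndIH : ((p ++ [y0]) ++ (y' ++ a')).Nodup := by
            have hsub : (p ++ (y' ++ a')).Sublist (p ++ (y' ++ a0 :: a')) :=
              ((List.sublist_cons_self a0 a').append_left y').append_left p
            have h1 : (y0 :: (p ++ (y' ++ a'))).Nodup :=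
              List.nodup_cons.2 ⟨fun hm => hy0all (hsub.subset hm), hsub.nodup hndrest⟩
            have hperm : ((p ++ [y0]) ++ (y' ++ a')).Perm (y0 :: (p ++ (y' ++ a'))) := by
              rw [List.append_assoc, List.singleton_append]; exact List.perm_middle
            exact hperm.nodup_iff.mpr h1
          have hIH := ih a' (p ++ [y0]) hlen' hndIH
          simp only [List.append_assoc, List.singleton_append] at hIH
          have hR := renOf_comp (S := S) (p ++ y0 :: y') (p ++ y0 :: a') (p ++ a0 :: a')
            (by simp [hlen']) (by simp)
          refine NEq.trans (NEq.congr_seq (NEq.symm hR) (NEq.refl _)) ?_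
          refine NEq.trans (NEq.seq_assoc _ _ _) ?_
          exact NEq.trans (NEq.congr_seq (NEq.refl _) hstep) hIH

theorem genR (γ : S.gen) (a : List Name) :
    ∀ (yr ar p : List Name), yr.length = ar.length → (p ++ (yr ++ ar)).Nodup →
    NEq₀ S (.seq (.gen γ a (p ++ ar)) (renOf ((p ++ ar).zip (p ++ yr))))
      (.gen γ a (p ++ yr)) := by
  intro yr
  induction yr with
  | nil =>
      intro ar p hlen hnd
      cases ar with
      | cons a0 a' => simp at hlen
      | nil =>
          simp only [List.append_nil]
          have hp : p.Nodup := by simpa using hnd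
          exact NEq.trans (NEq.congr_seq (NEq.refl _) (renOf_zip_self_idOf hp))
            (NEq.seq_id_right (.gen γ a p))
  | cons y0 y' ih =>
      intro ar p hlen hnd
      cases ar with
      | nil => simp at hlen
      | cons a0 a' =>
          have hlen' : y'.length = a'.length := by simpa using hlen
          have hnd2 : (y0 :: (p ++ (y' ++ a0 :: a'))).Nodup :=
            (List.perm_middle (a := y0) (l₁ := p) (l₂ := y' ++ a0 :: a')).nodup_iff.mp hnd
          have hy0all : y0 ∉ p ++ (y' ++ a0 :: a') := (List.nodup_cons.1 hnd2).1
          have hndrest : (p ++ (y' ++ a0 :: a')).Nodup := (List.nodup_cons.1 hnd2).2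
          have hsubN : (p ++ a0 :: a').Sublist (p ++ (y' ++ a0 :: a')) :=
            (List.sublist_append_right y' (a0 :: a')).append_left p
          have hndN : (p ++ a0 :: a').Nodup := hsubN.nodup hndrest
          have hy0N : y0 ∉ p ++ a0 :: a' := fun hm => hy0all (hsubN.subset hm)
          have hi : p.length < (p ++ a0 :: a').length := by simp
          have hstep := stepR γ a (p ++ a0 :: a') hndN p.length hi y0 hy0N
          rw [set_append_len] at hstep
          have hndIH : ((p ++ [y0]) ++ (y' ++ a')).Nodup := by
            have hsub : (p ++ (y' ++ a')).Sublist (p ++ (y' ++ a0 :: a')) :=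
              ((List.sublist_cons_self a0 a').append_left y').append_left p
            have h1 : (y0 :: (p ++ (y' ++ a'))).Nodup :=
              List.nodup_cons.2 ⟨fun hm => hy0all (hsub.subset hm), hsub.nodup hndrest⟩
            have hperm : ((p ++ [y0]) ++ (y' ++ a')).Perm (y0 :: (p ++ (y' ++ a'))) := by
              rw [List.append_assoc, List.singleton_append]; exact List.perm_middle
            exact hperm.nodup_iff.mpr h1
          have hIH := ih a' (p ++ [y0]) hlen' hndIH
          simp only [List.append_assoc, List.singleton_append] at hIH
          have hR := renOf_comp (S := S) (p ++ a0 :: a') (p ++ y0 :: a') (p ++ y0 :: y')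
            (by simp) (by simp [hlen'])
          refine NEq.trans (NEq.congr_seq (NEq.refl _) (NEq.symm hR)) ?_
          refine NEq.trans (NEq.symm (NEq.seq_assoc _ _ _)) ?_
          exact NEq.trans (NEq.congr_seq hstep (NEq.refl _)) hIH

theorem genRenL (γ : S.gen) (a b a' : List Name) (h : a'.length = a.length)
    (ha : a.Nodup) (ha' : a'.Nodup) :
    NEq₀ S (.seq (renOf (a'.zip a)) (.gen γ a b)) (.gen γ a' b) := by
  obtain ⟨y, hylen, hynd, hyav⟩ := exists_fresh a.length (a ++ a')
  have hya : (([] : List Name) ++ (y ++ a)).Nodup := by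
    rw [List.nil_append, List.nodup_append]
    exact ⟨hynd, ha, fun x hx z hz hxz => hyav x hx (List.mem_append.2 (Or.inl (hxz ▸ hz)))⟩
  have hay : (([] : List Name) ++ (a' ++ y)).Nodup := by
    rw [List.nil_append, List.nodup_append]
    exact ⟨ha', hynd, fun x hx z hz hxz => hyav z hz (List.mem_append.2 (Or.inr (hxz ▸ hx)))⟩
  have h1 := genL γ b y a [] hylen hya
  have h2 := genL γ b a' y [] (h.trans hylen.symm) hay
  simp only [List.nil_append] at h1 h2
  have hc := renOf_comp (S := S) a' y a (h.trans hylen.symm) hylen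
  refine NEq.trans (NEq.congr_seq (NEq.symm hc) (NEq.refl _)) ?_
  refine NEq.trans (NEq.seq_assoc _ _ _) ?_
  exact NEq.trans (NEq.congr_seq (NEq.refl _) h1) h2

theorem genRenR (γ : S.gen) (a b b' : List Name) (h : b'.length = b.length)
    (hb : b.Nodup) (hb' : b'.Nodup) :
    NEq₀ S (.seq (.gen γ a b) (renOf (b.zip b'))) (.gen γ a b') := by
  obtain ⟨y, hylen, hynd, hyav⟩ := exists_fresh b.length (b ++ b')
  have hyb : (([] : List Name) ++ (y ++ b)).Nodup := by
    rw [List.nil_append, List.nodup_append]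
    exact ⟨hynd, hb, fun x hx z hz hxz => hyav x hx (List.mem_append.2 (Or.inl (hxz ▸ hz)))⟩
  have hby : (([] : List Name) ++ (b' ++ y)).Nodup := by
    rw [List.nil_append, List.nodup_append]
    exact ⟨hb', hynd, fun x hx z hz hxz => hyav z hz (List.mem_append.2 (Or.inr (hxz ▸ hx)))⟩
  have h1 := genR γ a y b [] hylen hyb
  have h2 := genR γ a b' y [] (h.trans hylen.symm) hby
  simp only [List.nil_append] at h1 h2
  have hc := renOf_comp (S := S) b y b' hylen.symm (hylen.trans h.symm)
  refine NEq.trans (NEq.congr_seq (NEq.refl _) (NEq.symm hc)) ?_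
  refine NEq.trans (NEq.symm (NEq.seq_assoc _ _ _)) ?_
  exact NEq.trans (NEq.congr_seq h1 (NEq.refl _)) h2

/-! ### Permutation terms -/

theorem smul_injective (π : FinPerm) : Function.Injective (fun a : Name => π • a) :=
  fun x y hxy => (π : Equiv.Perm Name).injective hxy

theorem mul_smul_name (π σ : FinPerm) (a : Name) : (π * σ) • a = π • (σ • a) := rfl

theorem list_toFinset_map (f : Name → Name) (l : List Name) :
    (l.map f).toFinset = l.toFinset.image f := by
  induction l with
  | nil => simp
  | cons a l ih => simp [ih]

theorem smul_finset_toList_perm (π : FinPerm) (A : Finset Name) :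
    (π • A).toList.Perm (A.toList.map (π • ·)) := by
  apply List.perm_of_nodup_nodup_toFinset_eq (Finset.nodup_toList _)
    ((Finset.nodup_toList A).map (smul_injective π))
  rw [Finset.toList_toFinset, list_toFinset_map, Finset.toList_toFinset,
    Finset.smul_finset_def]

theorem permTermInv_eq (π : FinPerm) (A : Finset Name) :
    (permTermInv π A : NTrm S) = renOf ((A.toList.map (π • ·)).zip A.toList) := by
  rw [permTermInv, map_pair_eq_zip]

theorem permTermOf_eq (π : FinPerm) (A : Finset Name) :
    (permTermOf π A : NTrm S) = renOf (A.toList.zip (A.toList.map (π • ·))) := by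
  rw [permTermOf, map_pair_eq_zip']

theorem of_inv_cancel (π : FinPerm) (A : Finset Name) :
    NEq₀ S (.seq (permTermOf π A) (permTermInv π A)) (idOf A) := by
  rw [permTermOf_eq, permTermInv_eq]
  refine NEq.trans (renOf_comp A.toList (A.toList.map (π • ·)) A.toList (by simp) (by simp)) ?_
  have h := renOf_zip_self_idOf (S := S) (Finset.nodup_toList A)
  rwa [Finset.toList_toFinset] at h

theorem renOf_map_union (f : Name → Name × Name) {A B : Finset Name} (hd : Disjoint A B) :
    NEq₀ S (renOf ((A ∪ B).toList.map f))
      (.tens (renOf (A.toList.map f)) (renOf (B.toList.map f))) := by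
  have hperm : (A ∪ B).toList.Perm (A.toList ++ B.toList) := by
    apply List.perm_of_nodup_nodup_toFinset_eq (Finset.nodup_toList _)
    · rw [List.nodup_append]
      exact ⟨Finset.nodup_toList _, Finset.nodup_toList _,
        fun x hx y hy hxy => Finset.disjoint_left.1 hd (by simpa using hx) (by simpa [hxy] using hy)⟩
    · rw [List.toFinset_append]
      simp [Finset.toList_toFinset]
  refine NEq.trans (renOf_perm (hperm.map f)) ?_
  rw [List.map_append]
  exact renOf_append _ _

theorem permTermInv_union (π : FinPerm) {A B : Finset Name} (hd : Disjoint A B) :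
    NEq₀ S (permTermInv π (A ∪ B)) (.tens (permTermInv π A) (permTermInv π B)) :=
  renOf_map_union (fun a => (π • a, a)) hd

theorem permTermOf_union (π : FinPerm) {A B : Finset Name} (hd : Disjoint A B) :
    NEq₀ S (permTermOf π (A ∪ B)) (.tens (permTermOf π A) (permTermOf π B)) :=
  renOf_map_union (fun a => (a, π • a)) hd

theorem map_comp_pair (π σ : FinPerm) (l : List Name) :
    (l.map (σ • ·)).map (fun a => ((π : FinPerm) • a, a))
      = (l.map ((π * σ) • ·)).zip (l.map (σ • ·)) := by
  induction l with
  | nil => rfl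
  | cons a l ih => simp [ih, mul_smul_name]

theorem map_comp_pair' (π σ : FinPerm) (l : List Name) :
    (l.map (σ • ·)).map (fun a => (a, (π : FinPerm) • a))
      = (l.map (σ • ·)).zip (l.map ((π * σ) • ·)) := by
  induction l with
  | nil => rfl
  | cons a l ih => simp [ih, mul_smul_name]

theorem inv_comp (π σ : FinPerm) (A : Finset Name) :
    NEq₀ S (.seq (permTermInv π (σ • A)) (permTermInv σ A)) (permTermInv (π * σ) A) := by
  have h1 : NEq₀ S (permTermInv π (σ • A))
      (renOf ((A.toList.map ((π * σ) • ·)).zip (A.toList.map (σ • ·)))) := by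
    rw [← map_comp_pair]
    exact renOf_perm ((smul_finset_toList_perm σ A).map _)
  rw [permTermInv_eq σ, permTermInv_eq (π * σ)]
  refine NEq.trans (NEq.congr_seq h1 (NEq.refl _)) ?_
  exact renOf_comp _ _ _ (by simp) (by simp)

theorem of_comp (π σ : FinPerm) (A : Finset Name) :
    NEq₀ S (.seq (permTermOf σ A) (permTermOf π (σ • A))) (permTermOf (π * σ) A) := by
  have h1 : NEq₀ S (permTermOf π (σ • A))
      (renOf ((A.toList.map (σ • ·)).zip (A.toList.map ((π * σ) • ·)))) := by
    rw [← map_comp_pair']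
    exact renOf_perm ((smul_finset_toList_perm σ A).map _)
  rw [permTermOf_eq σ, permTermOf_eq (π * σ)]
  refine NEq.trans (NEq.congr_seq (NEq.refl _) h1) ?_
  exact renOf_comp _ _ _ (by simp) (by simp)

end Aux
/-- In any nominal monoidal theory, the permutation-action
and `δ` equations entail `π·t = π_A⁻¹ ; t ; π_B` for every term `t : A → B`. -/
theorem stmt10 {S : NSig} (t : NTrm S) (π : FinPerm) (h : t.WF) :
    NEq₀ S (.pact π t) (.seq (permTermInv π t.dom) (.seq t (permTermOf π t.cod))) := by
  revert h
  induction t generalizing π with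
  | gen γ a b =>
      intro h
      obtain ⟨hna, hnb, -, -⟩ := h
      have hmapa : (a.map (π • ·)).Nodup := hna.map (smul_injective π)
      have hmapb : (b.map (π • ·)).Nodup := hnb.map (smul_injective π)
      have hOb : NEq₀ S (permTermOf π b.toFinset) (renOf (b.zip (b.map (π • ·)))) := by
        rw [← map_pair_eq_zip']
        exact renOf_perm ((List.toFinset_toList hnb).map _)
      have h1 : NEq₀ S (.seq (.gen γ a b) (permTermOf π b.toFinset))
          (.gen γ a (b.map (π • ·))) :=
        NEq.trans (NEq.congr_seq (NEq.refl _) hOb)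
          (genRenR γ a b (b.map (π • ·)) (by simp) hnb hmapb)
      have hIa : NEq₀ S (permTermInv π a.toFinset) (renOf ((a.map (π • ·)).zip a)) := by
        rw [← map_pair_eq_zip]
        exact renOf_perm ((List.toFinset_toList hna).map _)
      have h2 : NEq₀ S (.seq (permTermInv π a.toFinset) (.gen γ a (b.map (π • ·))))
          (.gen γ (a.map (π • ·)) (b.map (π • ·))) :=
        NEq.trans (NEq.congr_seq hIa (NEq.refl _))
          (genRenL γ a (b.map (π • ·)) (a.map (π • ·)) (by simp) hna hmapa)
      refine NEq.trans (NEq.pact_gen π γ a b) (NEq.symm ?_)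
      exact NEq.trans (NEq.congr_seq (NEq.refl _) h1) h2
  | idt a =>
      intro _
      have e1 : NEq₀ S (permTermInv π ({a} : Finset Name)) (.delta (π • a) a) := by
        have e : (permTermInv π ({a} : Finset Name) : NTrm S)
            = NTrm.tens (.delta (π • a) a) .unit := by
          simp [permTermInv, renOf]
        rw [e]; exact NEq.tens_unit_right _
      have e2 : NEq₀ S (permTermOf π ({a} : Finset Name)) (.delta a (π • a)) := by
        have e : (permTermOf π ({a} : Finset Name) : NTrm S)
            = NTrm.tens (.delta a (π • a)) .unit := by
          simp [permTermOf, renOf]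
        rw [e]; exact NEq.tens_unit_right _
      refine NEq.trans (NEq.pact_idt π a) (NEq.symm ?_)
      refine NEq.trans (NEq.congr_seq e1 (NEq.congr_seq (NEq.symm (NEq.delta_id a)) e2)) ?_
      refine NEq.trans (NEq.congr_seq (NEq.refl _) (NEq.delta_comp a a (π • a))) ?_
      exact NEq.trans (NEq.delta_comp (π • a) a (π • a)) (NEq.delta_id (π • a))
  | delta a b =>
      intro _
      have e1 : NEq₀ S (permTermInv π ({a} : Finset Name)) (.delta (π • a) a) := by
        have e : (permTermInv π ({a} : Finset Name) : NTrm S)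
            = NTrm.tens (.delta (π • a) a) .unit := by
          simp [permTermInv, renOf]
        rw [e]; exact NEq.tens_unit_right _
      have e2 : NEq₀ S (permTermOf π ({b} : Finset Name)) (.delta b (π • b)) := by
        have e : (permTermOf π ({b} : Finset Name) : NTrm S)
            = NTrm.tens (.delta b (π • b)) .unit := by
          simp [permTermOf, renOf]
        rw [e]; exact NEq.tens_unit_right _
      refine NEq.trans (NEq.pact_delta π a b) (NEq.symm ?_)
      refine NEq.trans (NEq.congr_seq e1 (NEq.congr_seq (NEq.refl _) e2)) ?_
      refine NEq.trans (NEq.congr_seq (NEq.refl _) (NEq.delta_comp a b (π • b))) ?_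
      exact NEq.delta_comp (π • a) a (π • b)
  | unit =>
      intro _
      have e : (permTermInv π (∅ : Finset Name) : NTrm S) = .unit := by
        simp [permTermInv, renOf]
      have e' : (permTermOf π (∅ : Finset Name) : NTrm S) = .unit := by
        simp [permTermOf, renOf]
      refine NEq.trans (NEq.pact_unit π) (NEq.symm ?_)
      show NEq₀ S (.seq (permTermInv π (∅ : Finset Name))
        (.seq .unit (permTermOf π (∅ : Finset Name)))) .unit
      rw [e, e']
      exact NEq.trans (NEq.congr_seq (NEq.refl _) seq_unit_unit) seq_unit_unit
  | tens s t ihs iht =>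
      intro h
      obtain ⟨hs, ht, hdd, hcc⟩ := h
      have hA := permTermInv_union (S := S) π hdd
      have hB := permTermOf_union (S := S) π hcc
      refine NEq.trans (NEq.pact_tens π s t) ?_
      refine NEq.trans (NEq.congr_tens (ihs π hs) (iht π ht)) ?_
      refine NEq.trans (NEq.symm (NEq.interchange _ _ _ _)) ?_
      refine NEq.trans (NEq.congr_seq (NEq.refl _) (NEq.symm (NEq.interchange _ _ _ _))) ?_
      exact NEq.congr_seq (NEq.symm hA) (NEq.congr_seq (NEq.refl _) (NEq.symm hB))
  | seq s t ihs iht =>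
      intro h
      obtain ⟨hs, ht, hst⟩ := h
      have hcan : NEq₀ S (.seq (permTermOf π s.cod) (permTermInv π t.dom)) (idOf t.dom) := by
        rw [← hst]; exact of_inv_cancel π s.cod
      refine NEq.trans (NEq.pact_seq π s t) ?_
      refine NEq.trans (NEq.congr_seq (ihs π hs) (iht π ht)) ?_
      refine NEq.trans (NEq.seq_assoc _ _ _) ?_
      refine NEq.congr_seq (NEq.refl _) ?_
      refine NEq.trans (NEq.seq_assoc _ _ _) ?_
      refine NEq.trans (NEq.congr_seq (NEq.refl _) (NEq.symm (NEq.seq_assoc _ _ _))) ?_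
      refine NEq.trans (NEq.congr_seq (NEq.refl _) (NEq.congr_seq hcan (NEq.refl _))) ?_
      have hid : NEq₀ S (.seq (idOf t.dom) (.seq t (permTermOf π t.cod)))
          (.seq t (permTermOf π t.cod)) :=
        NEq.seq_id_left (NTrm.seq t (permTermOf π t.cod))
      refine NEq.trans (NEq.congr_seq (NEq.refl _) hid) ?_
      exact NEq.symm (NEq.seq_assoc _ _ _)
  | pact σ u ihu =>
      intro h
      have hinv := inv_comp (S := S) π σ u.dom
      have hof := of_comp (S := S) π σ u.cod
      refine NEq.trans (NEq.symm (NEq.pact_mul π σ u)) ?_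
      refine NEq.trans (ihu (π * σ) h) ?_
      refine NEq.symm ?_
      refine NEq.trans (NEq.congr_seq (NEq.refl _) (NEq.congr_seq (ihu σ h) (NEq.refl _))) ?_
      refine NEq.trans (NEq.symm (NEq.seq_assoc _ _ _)) ?_
      refine NEq.trans (NEq.congr_seq (NEq.symm (NEq.seq_assoc _ _ _)) (NEq.refl _)) ?_
      refine NEq.trans (NEq.congr_seq (NEq.congr_seq hinv (NEq.refl _)) (NEq.refl _)) ?_
      refine NEq.trans (NEq.seq_assoc _ _ _) ?_
      refine NEq.congr_seq (NEq.refl _) ?_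
      refine NEq.trans (NEq.seq_assoc _ _ _) ?_
      exact NEq.congr_seq (NEq.refl _) hof
end

section
/- Sequential composition in a nominal monoidal theory binds internal names: for composable terms t : A → C and s : C → B, the support of the α-equivalence class of t ; s is contained in A ∪ B; in particular names in C \ (A ∪ B) are not in the support of t ; s. -/
open MulAction

open Pointwise

namespace StmtAux

open NTrm

variable {S : NSig}

local notation:50 a " ≋ " b => NEq₀ S a b

/-- big tensor of a list of terms -/
def bigTens (l : List (NTrm S)) : NTrm S := l.foldr .tens .unit

lemma renOf_eq (l : List (Name × Name)) :
    (renOf l : NTrm S) = bigTens (l.map fun p => .delta p.1 p.2) := rfl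

lemma idOf_eq (A : Finset Name) : (idOf A : NTrm S) = bigTens (A.toList.map .idt) := rfl

lemma idOf_empty : (idOf ∅ : NTrm S) = .unit := by
  simp [idOf_eq, bigTens]

lemma bigTens_cons (t : NTrm S) (l : List (NTrm S)) :
    bigTens (t :: l) = .tens t (bigTens l) := rfl

lemma dom_renOf (l : List (Name × Name)) :
    (renOf l : NTrm S).dom = (l.map Prod.fst).toFinset := by
  induction l with
  | nil => rfl
  | cons p l ih =>
    simp only [renOf_eq, bigTens, List.map_cons, List.foldr_cons, List.toFinset_cons] at *
    rw [show (NTrm.tens (.delta p.1 p.2) (List.foldr NTrm.tens NTrm.unit (l.map fun p => NTrm.delta p.1 p.2)) : NTrm S).dom = {p.1} ∪ (List.foldr NTrm.tens NTrm.unit (l.map fun p => NTrm.delta p.1 p.2) : NTrm S).dom from rfl, ih]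
    ext x; simp

lemma cod_renOf (l : List (Name × Name)) :
    (renOf l : NTrm S).cod = (l.map Prod.snd).toFinset := by
  induction l with
  | nil => rfl
  | cons p l ih =>
    simp only [renOf_eq, bigTens, List.map_cons, List.foldr_cons, List.toFinset_cons] at *
    rw [show (NTrm.tens (.delta p.1 p.2) (List.foldr NTrm.tens NTrm.unit (l.map fun p => NTrm.delta p.1 p.2)) : NTrm S).cod = {p.2} ∪ (List.foldr NTrm.tens NTrm.unit (l.map fun p => NTrm.delta p.1 p.2) : NTrm S).cod from rfl, ih]
    ext x; simp

lemma dom_idOf (A : Finset Name) : (idOf A : NTrm S).dom = A := by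
  rw [idOf_eq]
  have : ∀ l : List Name, (bigTens (l.map NTrm.idt) : NTrm S).dom = l.toFinset := by
    intro l; induction l with
    | nil => rfl
    | cons a l ih =>
      simp only [bigTens, List.map_cons, List.foldr_cons, List.toFinset_cons] at *
      rw [show (NTrm.tens (.idt a) (List.foldr NTrm.tens NTrm.unit (l.map NTrm.idt)) : NTrm S).dom = {a} ∪ (List.foldr NTrm.tens NTrm.unit (l.map NTrm.idt) : NTrm S).dom from rfl, ih]
      ext x; simp
  rw [this, Finset.toList_toFinset]

lemma cod_idOf (A : Finset Name) : (idOf A : NTrm S).cod = A := by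
  rw [idOf_eq]
  have : ∀ l : List Name, (bigTens (l.map NTrm.idt) : NTrm S).cod = l.toFinset := by
    intro l; induction l with
    | nil => rfl
    | cons a l ih =>
      simp only [bigTens, List.map_cons, List.foldr_cons, List.toFinset_cons] at *
      rw [show (NTrm.tens (.idt a) (List.foldr NTrm.tens NTrm.unit (l.map NTrm.idt)) : NTrm S).cod = {a} ∪ (List.foldr NTrm.tens NTrm.unit (l.map NTrm.idt) : NTrm S).cod from rfl, ih]
      ext x; simp
  rw [this, Finset.toList_toFinset]

-- convenience identity laws
lemma seq_idl {A : Finset Name} {t : NTrm S} (h : t.dom = A) :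
    (NTrm.seq (idOf A) t) ≋ t := by
  subst h; exact NEq.seq_id_left t

lemma seq_idr {A : Finset Name} {t : NTrm S} (h : t.cod = A) :
    (NTrm.seq t (idOf A)) ≋ t := by
  subst h; exact NEq.seq_id_right t

lemma seq_unit_unit : (NTrm.seq (.unit : NTrm S) .unit) ≋ .unit := by
  have := seq_idl (S := S) (A := ∅) (t := .unit) rfl
  rwa [idOf_empty] at this

lemma bigTens_congr {l l' : List (NTrm S)} (h : List.Forall₂ (NEq₀ S) l l') :
    bigTens l ≋ bigTens l' := by
  induction h with
  | nil => exact NEq.refl _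
  | cons h _ ih => exact NEq.congr_tens h ih

lemma bigTens_congr_map {α : Type*} (l : List α) {f g : α → NTrm S}
    (h : ∀ x ∈ l, f x ≋ g x) :
    bigTens (l.map f) ≋ bigTens (l.map g) := by
  induction l with
  | nil => exact NEq.refl _
  | cons a l ih =>
    exact NEq.congr_tens (h a (by simp)) (ih fun x hx => h x (by simp [hx]))

lemma bigTens_perm {l l' : List (NTrm S)} (h : l.Perm l') :
    bigTens l ≋ bigTens l' := by
  induction h with
  | nil => exact NEq.refl _
  | cons t _ ih => exact NEq.congr_tens (NEq.refl _) ih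
  | swap t u l =>
    -- bigTens (u :: t :: l) = u ⊎ (t ⊎ bigTens l) ≋ t ⊎ (u ⊎ bigTens l)
    refine NEq.trans (NEq.symm (NEq.tens_assoc _ _ _)) ?_
    refine NEq.trans (NEq.congr_tens (NEq.tens_comm _ _) (NEq.refl _)) ?_
    exact NEq.tens_assoc _ _ _
  | trans _ _ ih1 ih2 => exact NEq.trans ih1 ih2

lemma bigTens_append (l l' : List (NTrm S)) :
    bigTens (l ++ l') ≋ .tens (bigTens l) (bigTens l') := by
  induction l with
  | nil => exact NEq.symm (NEq.tens_unit_left _)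
  | cons t l ih =>
    refine NEq.trans (NEq.congr_tens (NEq.refl t) ih) ?_
    exact NEq.symm (NEq.tens_assoc _ _ _)

lemma tens_left_comm (t u v : NTrm S) :
    (NTrm.tens t (.tens u v)) ≋ .tens u (.tens t v) := by
  refine NEq.trans (NEq.symm (NEq.tens_assoc _ _ _)) ?_
  refine NEq.trans (NEq.congr_tens (NEq.tens_comm _ _) (NEq.refl _)) ?_
  exact NEq.tens_assoc _ _ _

/-- componentwise sequential composition of big tensors -/
lemma bigTens_seq {α : Type*} (l : List α) (f g h : α → NTrm S)
    (H : ∀ x ∈ l, (NTrm.seq (f x) (g x)) ≋ h x) :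
    (NTrm.seq (bigTens (l.map f)) (bigTens (l.map g))) ≋ bigTens (l.map h) := by
  induction l with
  | nil => exact seq_unit_unit
  | cons a l ih =>
    refine NEq.trans (NEq.interchange _ _ _ _) ?_
    exact NEq.congr_tens (H a (by simp)) (ih fun x hx => H x (by simp [hx]))

end StmtAux
namespace StmtAux

open NTrm Pointwise

variable {S : NSig}

local notation:50 a " ≋ " b => NEq₀ S a b

lemma renOf_perm {l l' : List (Name × Name)} (h : l.Perm l') :
    (renOf l : NTrm S) ≋ renOf l' := by
  rw [renOf_eq, renOf_eq]
  exact bigTens_perm (h.map _)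

lemma toList_union_perm {A B : Finset Name} (h : Disjoint A B) :
    (A ∪ B).toList.Perm (A.toList ++ B.toList) := by
  apply List.perm_of_nodup_nodup_toFinset_eq (Finset.nodup_toList _)
  · rw [List.nodup_append]
    refine ⟨Finset.nodup_toList _, Finset.nodup_toList _, ?_⟩
    intro x hx y hy
    simp only [Finset.mem_toList] at hx hy
    exact h.forall_ne_finset hx hy
  · ext x; simp [Finset.mem_toList]

lemma idOf_union {A B : Finset Name} (h : Disjoint A B) :
    (idOf (A ∪ B) : NTrm S) ≋ .tens (idOf A) (idOf B) := by
  rw [idOf_eq, idOf_eq, idOf_eq]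
  refine NEq.trans (bigTens_perm ((toList_union_perm h).map _)) ?_
  rw [List.map_append]
  exact bigTens_append _ _

/-- componentwise composition of renamings -/
lemma renOf_seq {α : Type*} (l : List α) (f g : α → Name × Name)
    (hfg : ∀ x ∈ l, (f x).2 = (g x).1) :
    (NTrm.seq (renOf (l.map f)) (renOf (l.map g))) ≋
      renOf (l.map fun x => ((f x).1, (g x).2)) := by
  simp only [renOf_eq, List.map_map]
  refine bigTens_seq l _ _ _ fun x hx => ?_
  simp only [Function.comp_apply]
  rw [hfg x hx]
  exact NEq.delta_comp _ _ _

/-- the renaming term π⁻¹ on A : π•A → A -/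
noncomputable def Linv (π : FinPerm) (A : Finset Name) : NTrm S :=
  renOf (A.toList.map fun a => (π • a, a))

/-- the renaming term π on A : A → π•A -/
noncomputable def Lfor (π : FinPerm) (A : Finset Name) : NTrm S :=
  renOf (A.toList.map fun a => (a, π • a))

lemma Linv_eq_permTermInv (π : FinPerm) (A : Finset Name) :
    (Linv π A : NTrm S) = permTermInv π A := rfl

lemma Lfor_fix {π : FinPerm} {A : Finset Name} (h : ∀ a ∈ A, π • a = a) :
    (Lfor π A : NTrm S) ≋ idOf A := by
  rw [Lfor, renOf_eq, List.map_map, idOf_eq]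
  refine bigTens_congr_map _ fun a ha => ?_
  simp only [Function.comp]
  rw [h a (Finset.mem_toList.1 ha)]
  exact NEq.delta_id a

lemma Linv_fix {π : FinPerm} {A : Finset Name} (h : ∀ a ∈ A, π • a = a) :
    (Linv π A : NTrm S) ≋ idOf A := by
  rw [Linv, renOf_eq, List.map_map, idOf_eq]
  refine bigTens_congr_map _ fun a ha => ?_
  simp only [Function.comp]
  rw [h a (Finset.mem_toList.1 ha)]
  exact NEq.delta_id a

lemma Lfor_Linv (π : FinPerm) (A : Finset Name) :
    (NTrm.seq (Lfor π A) (Linv π A) : NTrm S) ≋ idOf A := by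
  rw [Lfor, Linv]
  refine NEq.trans (renOf_seq A.toList (fun a => (a, π • a)) (fun a => (π • a, a))
    (fun x _ => rfl)) ?_
  rw [renOf_eq, List.map_map, idOf_eq]
  exact bigTens_congr_map _ fun a _ => NEq.delta_id a

lemma smul_toList_perm (π : FinPerm) (A : Finset Name) :
    (π • A).toList.Perm (A.toList.map (π • ·)) := by
  apply List.perm_of_nodup_nodup_toFinset_eq (Finset.nodup_toList _)
  · exact (Finset.nodup_toList _).map fun x y hxy => π.1.injective hxy
  · ext x
    simp only [List.toFinset_toList, List.mem_toFinset, List.mem_map, Finset.mem_toList]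
    rw [Finset.mem_smul_finset]

lemma Linv_comp (π σ : FinPerm) (A : Finset Name) :
    (NTrm.seq (Linv π (σ • A)) (Linv σ A) : NTrm S) ≋ Linv (π * σ) A := by
  have h1 : (Linv π (σ • A) : NTrm S) ≋
      renOf (A.toList.map fun a => (π • σ • a, σ • a)) := by
    rw [Linv]
    refine NEq.trans (renOf_perm ((smul_toList_perm σ A).map _)) ?_
    rw [List.map_map]
    exact NEq.refl _
  refine NEq.trans (NEq.congr_seq h1 (NEq.refl _)) ?_
  rw [Linv]
  refine NEq.trans (renOf_seq A.toList (fun a => (π • σ • a, σ • a))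
    (fun a => (σ • a, a)) (fun x _ => rfl)) ?_
  rw [Linv]
  have : ∀ a : Name, π • σ • a = (π * σ) • a := fun a => (mul_smul π σ a).symm
  simp only [this]
  exact NEq.refl _

lemma Lfor_comp (π σ : FinPerm) (A : Finset Name) :
    (NTrm.seq (Lfor σ A) (Lfor π (σ • A)) : NTrm S) ≋ Lfor (π * σ) A := by
  have h1 : (Lfor π (σ • A) : NTrm S) ≋
      renOf (A.toList.map fun a => (σ • a, π • σ • a)) := by
    rw [Lfor]
    refine NEq.trans (renOf_perm ((smul_toList_perm σ A).map _)) ?_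
    rw [List.map_map]
    exact NEq.refl _
  refine NEq.trans (NEq.congr_seq (NEq.refl _) h1) ?_
  rw [Lfor]
  refine NEq.trans (renOf_seq A.toList (fun a => (a, σ • a))
    (fun a => (σ • a, π • σ • a)) (fun x _ => rfl)) ?_
  rw [Lfor]
  have : ∀ a : Name, π • σ • a = (π * σ) • a := fun a => (mul_smul π σ a).symm
  simp only [this]
  exact NEq.refl _

lemma renOf_append (l l' : List (Name × Name)) :
    (renOf (l ++ l') : NTrm S) ≋ .tens (renOf l) (renOf l') := by
  rw [renOf_eq, List.map_append]
  exact bigTens_append _ _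

lemma Linv_union {A B : Finset Name} (π : FinPerm) (h : Disjoint A B) :
    (Linv π (A ∪ B) : NTrm S) ≋ .tens (Linv π A) (Linv π B) := by
  rw [Linv, Linv, Linv]
  refine NEq.trans (renOf_perm ((toList_union_perm h).map _)) ?_
  rw [List.map_append]
  exact renOf_append _ _

lemma Lfor_union {A B : Finset Name} (π : FinPerm) (h : Disjoint A B) :
    (Lfor π (A ∪ B) : NTrm S) ≋ .tens (Lfor π A) (Lfor π B) := by
  rw [Lfor, Lfor, Lfor]
  refine NEq.trans (renOf_perm ((toList_union_perm h).map _)) ?_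
  rw [List.map_append]
  exact renOf_append _ _

end StmtAux
namespace StmtAux

open NTrm Pointwise

variable {S : NSig}

local notation:50 a " ≋ " b => NEq₀ S a b

lemma renOf_cons (p : Name × Name) (l : List (Name × Name)) :
    (renOf (p :: l) : NTrm S) = .tens (.delta p.1 p.2) (renOf l) := rfl

lemma getD_append_length (d : List Name) (a0 : Name) (a' : List Name) (y : Name) :
    (d ++ a0 :: a').getD d.length y = a0 := by
  induction d with
  | nil => rfl
  | cons z d ih => simpa [List.getD] using ih

lemma set_append_length (d : List Name) (a0 x0 : Name) (a' : List Name) :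
    (d ++ a0 :: a').set d.length x0 = d ++ x0 :: a' := by
  induction d with
  | nil => rfl
  | cons z d ih => simp [List.set, ih]

/-- a list of n fresh names avoiding F -/
def freshList (n : ℕ) (F : Finset ℕ) : List ℕ :=
  (List.range n).map fun i => F.sup id + 1 + i

lemma freshList_length (n : ℕ) (F : Finset ℕ) : (freshList n F).length = n := by
  simp [freshList]

lemma freshList_nodup (n : ℕ) (F : Finset ℕ) : (freshList n F).Nodup := by
  refine (List.nodup_range : (List.range n).Nodup).map fun i j hij => by omega

lemma freshList_fresh {n : ℕ} {F : Finset ℕ} {x : ℕ} (hx : x ∈ freshList n F) :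
    x ∉ F := by
  simp only [freshList, List.mem_map, List.mem_range] at hx
  obtain ⟨i, _, rfl⟩ := hx
  intro hmem
  have := Finset.le_sup (f := id) hmem
  simp only [id] at this
  omega

lemma renameLeft (γ : S.gen) (b : List Name) :
    ∀ (x a d : List Name), x.length = a.length →
    (d ++ a).Nodup → (d ++ x).Nodup → (∀ y ∈ x, y ∉ a) →
    (NTrm.seq (.tens (idOf d.toFinset) (renOf (x.zip a))) (.gen γ (d ++ a) b)) ≋
      .gen γ (d ++ x) b := by
  intro x
  induction x with
  | nil =>
    intro a d hlen hna hnx hfr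
    cases a with
    | cons a0 a' => simp at hlen
    | nil =>
      refine NEq.trans (NEq.congr_seq (NEq.tens_unit_right _) (NEq.refl _)) (seq_idl ?_)
      show (d ++ ([] : List Name)).toFinset = d.toFinset
      simp
  | cons x0 x' ih =>
    intro a d hlen hna hnx hfr
    cases a with
    | nil => simp at hlen
    | cons a0 a' =>
      have hlen' : x'.length = a'.length := by simpa using hlen
      -- basic membership facts
      simp only [List.nodup_append, List.nodup_cons, List.disjoint_cons_right,
        List.mem_cons] at hna hnx
      have hx0a : x0 ∉ a0 :: a' := hfr x0 (by simp)
      have hx0a0 : x0 ≠ a0 := fun h => hx0a (by simp [h])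
      have hx0a' : x0 ∉ a' := fun h => hx0a (by simp [h])
      have hx0d : x0 ∉ d := fun h => hnx.2.2 x0 h x0 (Or.inl rfl) rfl
      have ha0d : a0 ∉ d := fun h => hna.2.2 a0 h a0 (Or.inl rfl) rfl
      have ha0a' : a0 ∉ a' := hna.2.1.1
      have hDA' : Disjoint d.toFinset a'.toFinset := by
        rw [Finset.disjoint_left]
        intro y hy hy'
        simp only [List.mem_toFinset] at hy hy'
        exact hna.2.2 y hy y (Or.inr hy') rfl
      have hDx0 : Disjoint d.toFinset ({x0} : Finset Name) := by
        rw [Finset.disjoint_left]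
        intro y hy hy'
        simp only [List.mem_toFinset] at hy
        simp only [Finset.mem_singleton] at hy'
        exact hx0d (hy' ▸ hy)
      set D := d.toFinset with hD
      set A' := a'.toFinset with hA'
      set R' := (renOf (x'.zip a') : NTrm S) with hR'
      have hcodR' : R'.cod = A' := by
        rw [hR', cod_renOf, List.map_snd_zip (le_of_eq hlen'.symm)]
      -- step 1 : δ x0 a0 ⊎ R' ≋ (id_{x0} ⊎ R') ; (δ x0 a0 ⊎ id_{A'})
      have step1 : (NTrm.tens (.delta x0 a0) R') ≋
          .seq (.tens (idOf {x0}) R') (.tens (.delta x0 a0) (idOf A')) := by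
        refine NEq.symm (NEq.trans (NEq.interchange _ _ _ _) ?_)
        exact NEq.congr_tens (seq_idl rfl) (seq_idr hcodR')
      -- step 2 : distribute id_D over a seq
      have step2 : ∀ P Q : NTrm S, (NTrm.tens (idOf D) (.seq P Q)) ≋
          .seq (.tens (idOf D) P) (.tens (idOf D) Q) := by
        intro P Q
        refine NEq.symm (NEq.trans (NEq.interchange _ _ _ _) ?_)
        exact NEq.congr_tens (seq_idl (dom_idOf D)) (NEq.refl _)
      -- erase identity
      have herase : (d ++ a0 :: a').toFinset.erase a0 = D ∪ A' := by
        ext y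
        simp only [Finset.mem_erase, List.toFinset_append, List.toFinset_cons,
          Finset.mem_union, Finset.mem_insert, List.mem_toFinset, hD, hA']
        constructor
        · rintro ⟨hne, h | h | h⟩
          · exact Or.inl (by simpa using h)
          · exact absurd h hne
          · exact Or.inr (by simpa using h)
        · rintro (h | h)
          · exact ⟨fun he => ha0d (he ▸ (by simpa using h)), Or.inl h⟩
          · exact ⟨fun he => ha0a' (he ▸ (by simpa using h)), Or.inr (Or.inr h)⟩
      -- the middle stage rearranged into nmt_left shape
      have stage1 : (NTrm.tens (idOf D) (.tens (.delta x0 a0) (idOf A'))) ≋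
          .tens (.delta x0 a0) (idOf ((d ++ a0 :: a').toFinset.erase a0)) := by
        refine NEq.trans (tens_left_comm _ _ _) ?_
        refine NEq.congr_tens (NEq.refl _) ?_
        rw [herase]
        exact NEq.symm (idOf_union hDA')
      -- nmt_left instance
      have hi : d.length < (d ++ a0 :: a').length := by simp
      have hx0' : x0 ∉ d ++ a0 :: a' := by
        simp only [List.mem_append, List.mem_cons]
        rintro (h | h | h)
        exacts [hx0d h, hx0a0 h, hx0a' h]
      have nmt := NEq.nmt_left (E := fun _ _ => False) γ (d ++ a0 :: a') b
        d.length hi x0 hx0'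
      rw [getD_append_length, set_append_length] at nmt
      -- assemble
      show (NTrm.seq (.tens (idOf D) (.tens (.delta x0 a0) R'))
        (.gen γ (d ++ a0 :: a') b)) ≋ _
      refine NEq.trans (NEq.congr_seq
        (NEq.trans (NEq.congr_tens (NEq.refl _) step1) (step2 _ _)) (NEq.refl _)) ?_
      refine NEq.trans (NEq.seq_assoc _ _ _) ?_
      refine NEq.trans (NEq.congr_seq (NEq.refl _)
        (NEq.trans (NEq.congr_seq stage1 (NEq.refl _)) nmt)) ?_
      -- now : (id_D ⊎ (id_{x0} ⊎ R')) ; gen γ (d ++ x0 :: a') b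
      have rearr : (NTrm.tens (idOf D) (.tens (idOf {x0}) R')) ≋
          .tens (idOf (d ++ [x0]).toFinset) R' := by
        refine NEq.trans (NEq.symm (NEq.tens_assoc _ _ _)) ?_
        refine NEq.congr_tens ?_ (NEq.refl _)
        have : (d ++ [x0]).toFinset = D ∪ {x0} := by simp [hD]
        rw [this]
        exact NEq.symm (idOf_union hDx0)
      refine NEq.trans (NEq.congr_seq rearr (NEq.refl _)) ?_
      have happ : d ++ x0 :: a' = (d ++ [x0]) ++ a' := by simp
      have happ2 : d ++ x0 :: x' = (d ++ [x0]) ++ x' := by simp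
      rw [happ, happ2]
      refine ih a' (d ++ [x0]) hlen' ?_ ?_ (fun y hy => fun h => (hfr y (by simp [hy])) (by simp [h]))
      · rw [← happ]
        simp only [List.nodup_append, List.nodup_cons, List.disjoint_cons_right, List.mem_cons]
        exact ⟨hna.1, ⟨hx0a', hna.2.1.2⟩, fun y hy z hz => by
          rcases hz with hz | hz
          · exact fun e => by subst e; subst hz; exact hx0d hy
          · exact hna.2.2 y hy z (Or.inr hz)⟩
      · rw [← happ2]
        simp only [List.nodup_append, List.nodup_cons, List.disjoint_cons_right, List.mem_cons]
        exact hnx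

end StmtAux
namespace StmtAux

open NTrm Pointwise

variable {S : NSig}

local notation:50 a " ≋ " b => NEq₀ S a b

lemma renameRight (γ : S.gen) (a : List Name) :
    ∀ (x bl d : List Name), x.length = bl.length →
    (d ++ bl).Nodup → (d ++ x).Nodup → (∀ y ∈ x, y ∉ bl) →
    (NTrm.seq (.gen γ a (d ++ bl)) (.tens (idOf d.toFinset) (renOf (bl.zip x)))) ≋
      .gen γ a (d ++ x) := by
  intro x
  induction x with
  | nil =>
    intro bl d hlen hnb hnx hfr
    cases bl with
    | cons b0 b' => simp at hlen
    | nil =>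
      refine NEq.trans (NEq.congr_seq (NEq.refl _) (NEq.tens_unit_right _)) (seq_idr ?_)
      show (d ++ ([] : List Name)).toFinset = d.toFinset
      simp
  | cons x0 x' ih =>
    intro bl d hlen hnb hnx hfr
    cases bl with
    | nil => simp at hlen
    | cons b0 b' =>
      have hlen' : x'.length = b'.length := by simpa using hlen
      simp only [List.nodup_append, List.nodup_cons, List.disjoint_cons_right,
        List.mem_cons] at hnb hnx
      have hx0b : x0 ∉ b0 :: b' := hfr x0 (by simp)
      have hx0b0 : x0 ≠ b0 := fun h => hx0b (by simp [h])
      have hx0b' : x0 ∉ b' := fun h => hx0b (by simp [h])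
      have hx0d : x0 ∉ d := fun h => hnx.2.2 x0 h x0 (Or.inl rfl) rfl
      have hb0d : b0 ∉ d := fun h => hnb.2.2 b0 h b0 (Or.inl rfl) rfl
      have hb0b' : b0 ∉ b' := hnb.2.1.1
      have hDB' : Disjoint d.toFinset b'.toFinset := by
        rw [Finset.disjoint_left]
        intro y hy hy'
        simp only [List.mem_toFinset] at hy hy'
        exact hnb.2.2 y hy y (Or.inr hy') rfl
      have hDx0 : Disjoint d.toFinset ({x0} : Finset Name) := by
        rw [Finset.disjoint_left]
        intro y hy hy'
        simp only [List.mem_toFinset] at hy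
        simp only [Finset.mem_singleton] at hy'
        exact hx0d (hy' ▸ hy)
      set D := d.toFinset with hD
      set B' := b'.toFinset with hB'
      set R' := (renOf (b'.zip x') : NTrm S) with hR'
      have hdomR' : R'.dom = B' := by
        rw [hR', dom_renOf, List.map_fst_zip (le_of_eq hlen'.symm)]
      -- step 1 : δ b0 x0 ⊎ R' ≋ (δ b0 x0 ⊎ id_{B'}) ; (id_{x0} ⊎ R')
      have step1 : (NTrm.tens (.delta b0 x0) R') ≋
          .seq (.tens (.delta b0 x0) (idOf B')) (.tens (idOf {x0}) R') := by
        refine NEq.symm (NEq.trans (NEq.interchange _ _ _ _) ?_)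
        exact NEq.congr_tens (seq_idr rfl) (seq_idl hdomR')
      have step2 : ∀ P Q : NTrm S, (NTrm.tens (idOf D) (.seq P Q)) ≋
          .seq (.tens (idOf D) P) (.tens (idOf D) Q) := by
        intro P Q
        refine NEq.symm (NEq.trans (NEq.interchange _ _ _ _) ?_)
        exact NEq.congr_tens (seq_idl (dom_idOf D)) (NEq.refl _)
      have herase : (d ++ b0 :: b').toFinset.erase b0 = D ∪ B' := by
        ext y
        simp only [Finset.mem_erase, List.toFinset_append, List.toFinset_cons,
          Finset.mem_union, Finset.mem_insert, List.mem_toFinset, hD, hB']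
        constructor
        · rintro ⟨hne, h | h | h⟩
          · exact Or.inl (by simpa using h)
          · exact absurd h hne
          · exact Or.inr (by simpa using h)
        · rintro (h | h)
          · exact ⟨fun he => hb0d (he ▸ (by simpa using h)), Or.inl h⟩
          · exact ⟨fun he => hb0b' (he ▸ (by simpa using h)), Or.inr (Or.inr h)⟩
      have stage1 : (NTrm.tens (idOf D) (.tens (.delta b0 x0) (idOf B'))) ≋
          .tens (idOf ((d ++ b0 :: b').toFinset.erase b0)) (.delta b0 x0) := by
        refine NEq.trans (NEq.congr_tens (NEq.refl _) (NEq.tens_comm _ _)) ?_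
        refine NEq.trans (NEq.symm (NEq.tens_assoc _ _ _)) ?_
        refine NEq.congr_tens ?_ (NEq.refl _)
        rw [herase]
        exact NEq.symm (idOf_union hDB')
      have hi : d.length < (d ++ b0 :: b').length := by simp
      have hx0' : x0 ∉ d ++ b0 :: b' := by
        simp only [List.mem_append, List.mem_cons]
        rintro (h | h | h)
        exacts [hx0d h, hx0b0 h, hx0b' h]
      have nmt := NEq.nmt_right (E := fun _ _ => False) γ a (d ++ b0 :: b')
        d.length hi x0 hx0'
      rw [getD_append_length, set_append_length] at nmt
      show (NTrm.seq (.gen γ a (d ++ b0 :: b'))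
        (.tens (idOf D) (.tens (.delta b0 x0) R'))) ≋ _
      refine NEq.trans (NEq.congr_seq (NEq.refl _)
        (NEq.trans (NEq.congr_tens (NEq.refl _) step1) (step2 _ _))) ?_
      refine NEq.trans (NEq.symm (NEq.seq_assoc _ _ _)) ?_
      refine NEq.trans (NEq.congr_seq
        (NEq.trans (NEq.congr_seq (NEq.refl _) stage1) nmt) (NEq.refl _)) ?_
      have rearr : (NTrm.tens (idOf D) (.tens (idOf {x0}) R')) ≋
          .tens (idOf (d ++ [x0]).toFinset) R' := by
        refine NEq.trans (NEq.symm (NEq.tens_assoc _ _ _)) ?_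
        refine NEq.congr_tens ?_ (NEq.refl _)
        have : (d ++ [x0]).toFinset = D ∪ {x0} := by simp [hD]
        rw [this]
        exact NEq.symm (idOf_union hDx0)
      refine NEq.trans (NEq.congr_seq (NEq.refl _) rearr) ?_
      have happ : d ++ x0 :: b' = (d ++ [x0]) ++ b' := by simp
      have happ2 : d ++ x0 :: x' = (d ++ [x0]) ++ x' := by simp
      rw [happ, happ2]
      refine ih b' (d ++ [x0]) hlen' ?_ ?_
        (fun y hy => fun h => (hfr y (by simp [hy])) (by simp [h]))
      · rw [← happ]
        simp only [List.nodup_append, List.nodup_cons, List.disjoint_cons_right,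
          List.mem_cons]
        exact ⟨hnb.1, ⟨hx0b', hnb.2.1.2⟩, fun y hy z hz => by
          rcases hz with hz | hz
          · exact fun e => by subst e; subst hz; exact hx0d hy
          · exact hnb.2.2 y hy z (Or.inr hz)⟩
      · rw [← happ2]
        simp only [List.nodup_append, List.nodup_cons, List.disjoint_cons_right,
          List.mem_cons]
        exact hnx

end StmtAux
namespace StmtAux

open NTrm Pointwise

variable {S : NSig}

local notation:50 a " ≋ " b => NEq₀ S a b

lemma smul_injective (π : FinPerm) : Function.Injective (π • · : Name → Name) :=
  fun x y hxy => π.1.injective hxy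

lemma gen_left (γ : S.gen) (a b : List Name) (ha : a.Nodup) (π : FinPerm) :
    (NTrm.seq (Linv π a.toFinset) (.gen γ a b)) ≋ .gen γ (a.map (π • ·)) b := by
  classical
  set c := freshList a.length (a.toFinset ∪ (a.map (π • ·)).toFinset) with hc
  have hclen : c.length = a.length := freshList_length _ _
  have hcnd : c.Nodup := freshList_nodup _ _
  have hca : ∀ y ∈ c, y ∉ a := fun y hy h =>
    freshList_fresh hy (by simp [List.mem_toFinset.2 h])
  have hcpa : ∀ y ∈ a.map (π • ·), y ∉ c := fun y hy h =>
    freshList_fresh h (by simp only [Finset.mem_union, List.mem_toFinset]; exact Or.inr hy)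
  have hpand : (a.map (π • ·)).Nodup := ha.map (smul_injective π)
  -- step 0 : reindex Linv along the list a
  have step0 : (Linv π a.toFinset : NTrm S) ≋ renOf (a.map fun y => (π • y, y)) := by
    rw [Linv]
    exact renOf_perm ((List.toFinset_toList ha).map _)
  -- decompose into two renamings through the fresh names c
  have hT1 : ((a.zip c).map fun p => (π • p.1, p.2)) = (a.map (π • ·)).zip c := by
    rw [List.zip_map_left]; rfl
  have hT2 : ((a.zip c).map fun p => (p.2, p.1)) = c.zip a := List.zip_swap a c
  have hT3 : ((a.zip c).map fun p => (π • p.1, p.1)) = a.map fun y => (π • y, y) := by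
    have : ((a.zip c).map fun p => (π • p.1, p.1)) =
        ((a.zip c).map Prod.fst).map fun y => (π • y, y) := by
      rw [List.map_map]; rfl
    rw [this, List.map_fst_zip (le_of_eq hclen.symm)]
  have decomp : (renOf (a.map fun y => (π • y, y)) : NTrm S) ≋
      .seq (renOf ((a.map (π • ·)).zip c)) (renOf (c.zip a)) := by
    refine NEq.symm ?_
    rw [← hT1, ← hT2]
    refine NEq.trans (renOf_seq (a.zip c) (fun p => (π • p.1, p.2))
      (fun p => (p.2, p.1)) (fun p _ => rfl)) ?_
    rw [hT3]
    exact NEq.refl _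
  -- renaming c → a applied to the generator
  have hstep1 : (NTrm.seq (renOf (c.zip a)) (.gen γ a b)) ≋ .gen γ c b := by
    have h := renameLeft γ b c a [] (hclen.trans rfl) (by simpa using ha)
      (by simpa using hcnd) hca
    simp only [List.nil_append, List.toFinset_nil] at h
    rw [idOf_empty] at h
    exact NEq.trans (NEq.congr_seq (NEq.symm (NEq.tens_unit_left _)) (NEq.refl _)) h
  -- renaming πa → c applied to the generator
  have hstep2 : (NTrm.seq (renOf ((a.map (π • ·)).zip c)) (.gen γ c b)) ≋
      .gen γ (a.map (π • ·)) b := by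
    have h := renameLeft γ b (a.map (π • ·)) c []
      (by simp [hclen]) (by simpa using hcnd) (by simpa using hpand) hcpa
    simp only [List.nil_append, List.toFinset_nil] at h
    rw [idOf_empty] at h
    exact NEq.trans (NEq.congr_seq (NEq.symm (NEq.tens_unit_left _)) (NEq.refl _)) h
  refine NEq.trans (NEq.congr_seq (NEq.trans step0 decomp) (NEq.refl _)) ?_
  refine NEq.trans (NEq.seq_assoc _ _ _) ?_
  exact NEq.trans (NEq.congr_seq (NEq.refl _) hstep1) hstep2

lemma gen_right (γ : S.gen) (a b : List Name) (hb : b.Nodup) (π : FinPerm) :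
    (NTrm.seq (.gen γ a b) (Lfor π b.toFinset)) ≋ .gen γ a (b.map (π • ·)) := by
  classical
  set c := freshList b.length (b.toFinset ∪ (b.map (π • ·)).toFinset) with hc
  have hclen : c.length = b.length := freshList_length _ _
  have hcnd : c.Nodup := freshList_nodup _ _
  have hcb : ∀ y ∈ c, y ∉ b := fun y hy h =>
    freshList_fresh hy (by simp [List.mem_toFinset.2 h])
  have hcpb : ∀ y ∈ b.map (π • ·), y ∉ c := fun y hy h =>
    freshList_fresh h (by simp only [Finset.mem_union, List.mem_toFinset]; exact Or.inr hy)
  have hpbnd : (b.map (π • ·)).Nodup := hb.map (smul_injective π)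
  have step0 : (Lfor π b.toFinset : NTrm S) ≋ renOf (b.map fun y => (y, π • y)) := by
    rw [Lfor]
    exact renOf_perm ((List.toFinset_toList hb).map _)
  have hU1 : ((b.zip c).map fun p => (p.1, p.2)) = b.zip c := by
    rw [show (fun p : Name × Name => (p.1, p.2)) = id from rfl, List.map_id]
  have hU2 : ((b.zip c).map fun p => (p.2, π • p.1)) = c.zip (b.map (π • ·)) := by
    rw [List.zip_map_right, ← List.zip_swap, List.map_map]
    rfl
  have hU3 : ((b.zip c).map fun p => (p.1, π • p.1)) = b.map fun y => (y, π • y) := by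
    have : ((b.zip c).map fun p => (p.1, π • p.1)) =
        ((b.zip c).map Prod.fst).map fun y => (y, π • y) := by
      rw [List.map_map]; rfl
    rw [this, List.map_fst_zip (le_of_eq hclen.symm)]
  have decomp : (renOf (b.map fun y => (y, π • y)) : NTrm S) ≋
      .seq (renOf (b.zip c)) (renOf (c.zip (b.map (π • ·)))) := by
    refine NEq.symm ?_
    rw [← hU1, ← hU2]
    refine NEq.trans (renOf_seq (b.zip c) (fun p => (p.1, p.2))
      (fun p => (p.2, π • p.1)) (fun p _ => rfl)) ?_
    rw [hU3]
    exact NEq.refl _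
  have hstep1 : (NTrm.seq (.gen γ a b) (renOf (b.zip c))) ≋ .gen γ a c := by
    have h := renameRight γ a c b [] (hclen.trans rfl) (by simpa using hb)
      (by simpa using hcnd) hcb
    simp only [List.nil_append, List.toFinset_nil] at h
    rw [idOf_empty] at h
    exact NEq.trans (NEq.congr_seq (NEq.refl _) (NEq.symm (NEq.tens_unit_left _))) h
  have hstep2 : (NTrm.seq (.gen γ a c) (renOf (c.zip (b.map (π • ·))))) ≋
      .gen γ a (b.map (π • ·)) := by
    have h := renameRight γ a (b.map (π • ·)) c []
      (by simp [hclen]) (by simpa using hcnd) (by simpa using hpbnd) hcpb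
    simp only [List.nil_append, List.toFinset_nil] at h
    rw [idOf_empty] at h
    exact NEq.trans (NEq.congr_seq (NEq.refl _) (NEq.symm (NEq.tens_unit_left _))) h
  refine NEq.trans (NEq.congr_seq (NEq.refl _) (NEq.trans step0 decomp)) ?_
  refine NEq.trans (NEq.symm (NEq.seq_assoc _ _ _)) ?_
  exact NEq.trans (NEq.congr_seq hstep1 (NEq.refl _)) hstep2

end StmtAux
namespace StmtAux

open NTrm Pointwise

variable {S : NSig}

local notation:50 a " ≋ " b => NEq₀ S a b

/-- Key equivariance lemma: `π · t ≋ π⁻¹_A ; t ; π_C`. -/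
lemma key (t : NTrm S) (ht : t.WF) (π : FinPerm) :
    (NTrm.pact π t) ≋ .seq (.seq (Linv π t.dom) t) (Lfor π t.cod) := by
  induction t generalizing π with
  | gen γ a b =>
    obtain ⟨ha, hb, -, -⟩ := ht
    refine NEq.trans (NEq.pact_gen π γ a b) (NEq.symm ?_)
    refine NEq.trans (NEq.congr_seq (gen_left γ a b ha π) (NEq.refl _)) ?_
    exact gen_right γ (a.map (π • ·)) b hb π
  | idt a =>
    have h1 : (Linv π ({a} : Finset Name) : NTrm S) ≋ .delta (π • a) a := by
      rw [Linv, Finset.toList_singleton]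
      exact NEq.tens_unit_right _
    have h2 : (Lfor π ({a} : Finset Name) : NTrm S) ≋ .delta a (π • a) := by
      rw [Lfor, Finset.toList_singleton]
      exact NEq.tens_unit_right _
    refine NEq.trans (NEq.pact_idt π a) (NEq.symm ?_)
    refine NEq.trans (NEq.congr_seq (NEq.congr_seq h1 (NEq.symm (NEq.delta_id a))) h2) ?_
    refine NEq.trans (NEq.congr_seq (NEq.delta_comp _ _ _) (NEq.refl _)) ?_
    exact NEq.trans (NEq.delta_comp _ _ _) (NEq.delta_id _)
  | delta a b =>
    have h1 : (Linv π ({a} : Finset Name) : NTrm S) ≋ .delta (π • a) a := by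
      rw [Linv, Finset.toList_singleton]
      exact NEq.tens_unit_right _
    have h2 : (Lfor π ({b} : Finset Name) : NTrm S) ≋ .delta b (π • b) := by
      rw [Lfor, Finset.toList_singleton]
      exact NEq.tens_unit_right _
    refine NEq.trans (NEq.pact_delta π a b) (NEq.symm ?_)
    refine NEq.trans (NEq.congr_seq (NEq.congr_seq h1 (NEq.refl _)) h2) ?_
    refine NEq.trans (NEq.congr_seq (NEq.delta_comp _ _ _) (NEq.refl _)) ?_
    exact NEq.delta_comp _ _ _
  | unit =>
    have h1 : (Linv π (∅ : Finset Name) : NTrm S) = .unit := by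
      rw [Linv, Finset.toList_empty]; rfl
    have h2 : (Lfor π (∅ : Finset Name) : NTrm S) = .unit := by
      rw [Lfor, Finset.toList_empty]; rfl
    refine NEq.trans (NEq.pact_unit π) (NEq.symm ?_)
    show (NTrm.seq (.seq (Linv π ∅) .unit) (Lfor π ∅)) ≋ .unit
    rw [h1, h2]
    exact NEq.trans (NEq.congr_seq seq_unit_unit (NEq.refl _)) seq_unit_unit
  | tens s u ihs ihu =>
    obtain ⟨hws, hwu, hdd, hdc⟩ := ht
    refine NEq.trans (NEq.pact_tens π s u) ?_
    refine NEq.trans (NEq.congr_tens (ihs hws π) (ihu hwu π)) (NEq.symm ?_)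
    show (NTrm.seq (.seq (Linv π (s.dom ∪ u.dom)) (.tens s u)) (Lfor π (s.cod ∪ u.cod))) ≋ _
    refine NEq.trans (NEq.congr_seq
      (NEq.congr_seq (Linv_union π hdd) (NEq.refl _)) (Lfor_union π hdc)) ?_
    refine NEq.trans (NEq.congr_seq (NEq.interchange _ _ _ _) (NEq.refl _)) ?_
    exact NEq.interchange _ _ _ _
  | seq s u ihs ihu =>
    obtain ⟨hws, hwu, hsc⟩ := ht
    refine NEq.trans (NEq.pact_seq π s u) ?_
    refine NEq.trans (NEq.congr_seq (ihs hws π) (ihu hwu π)) ?_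
    show (NTrm.seq (.seq (.seq (Linv π s.dom) s) (Lfor π s.cod))
        (.seq (.seq (Linv π u.dom) u) (Lfor π u.cod))) ≋
      .seq (.seq (Linv π s.dom) (.seq s u)) (Lfor π u.cod)
    rw [← hsc]
    have mid : (NTrm.seq (Lfor π s.cod) (Linv π s.cod) : NTrm S) ≋ idOf s.cod :=
      Lfor_Linv π s.cod
    refine NEq.trans (NEq.seq_assoc _ _ _) ?_
    refine NEq.trans (NEq.congr_seq (NEq.refl _)
      (NEq.trans (NEq.congr_seq (NEq.refl _) (NEq.seq_assoc _ _ _))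
        (NEq.symm (NEq.seq_assoc _ _ _)))) ?_
    refine NEq.trans (NEq.congr_seq (NEq.refl _)
      (NEq.congr_seq mid (NEq.refl _))) ?_
    have hid : (NTrm.seq (idOf s.cod) (.seq u (Lfor π u.cod)) : NTrm S) ≋
        .seq u (Lfor π u.cod) := seq_idl (by show u.dom = s.cod; rw [hsc])
    refine NEq.trans (NEq.congr_seq (NEq.refl _) hid) ?_
    refine NEq.trans (NEq.symm (NEq.seq_assoc _ _ _)) ?_
    exact NEq.congr_seq (NEq.seq_assoc _ _ _) (NEq.refl _)
  | pact σ u ihu =>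
    refine NEq.trans (NEq.symm (NEq.pact_mul π σ u)) ?_
    refine NEq.trans (ihu ht (π * σ)) (NEq.symm ?_)
    show (NTrm.seq (.seq (Linv π (σ • u.dom)) (.pact σ u)) (Lfor π (σ • u.cod))) ≋ _
    refine NEq.trans (NEq.congr_seq (NEq.congr_seq (NEq.refl _) (ihu ht σ))
      (NEq.refl _)) ?_
    -- (A ; ((B;u);C)) ; D
    refine NEq.trans (NEq.congr_seq (NEq.congr_seq (NEq.refl _)
      (NEq.seq_assoc _ _ _)) (NEq.refl _)) ?_
    -- (A ; (B;(u;C))) ; D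
    refine NEq.trans (NEq.congr_seq (NEq.symm (NEq.seq_assoc _ _ _)) (NEq.refl _)) ?_
    -- ((A;B) ; (u;C)) ; D
    refine NEq.trans (NEq.congr_seq (NEq.congr_seq (Linv_comp π σ u.dom)
      (NEq.refl _)) (NEq.refl _)) ?_
    -- (L ; (u;C)) ; D
    refine NEq.trans (NEq.seq_assoc _ _ _) ?_
    -- L ; ((u;C) ; D)
    refine NEq.trans (NEq.congr_seq (NEq.refl _) (NEq.seq_assoc _ _ _)) ?_
    -- L ; (u ; (C;D))
    refine NEq.trans (NEq.congr_seq (NEq.refl _)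
      (NEq.congr_seq (NEq.refl _) (Lfor_comp π σ u.cod))) ?_
    -- L ; (u ; F)
    exact NEq.symm (NEq.seq_assoc _ _ _)

end StmtAux
/-- Sequential composition binds internal names: for
`t : A → C` and `s : C → B`, the support of `t ; s` is contained in `A ∪ B`;
in particular, names in `C \ (A ∪ B)` are not in the support of `t ; s`. -/
theorem stmt12 {S : NSig} (t s : NTrm S) (ht : t.WF) (hs : s.WF)
    (hc : t.cod = s.dom) :
    TSupports S (↑(t.dom ∪ s.cod) : Set Name) (.seq t s) ∧
    msupp S (.seq t s) ⊆ (↑(t.dom ∪ s.cod) : Set Name) ∧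
    ∀ c ∈ t.cod, c ∉ t.dom → c ∉ s.cod → c ∉ msupp S (.seq t s) := by
  have hTS : TSupports S (↑(t.dom ∪ s.cod) : Set Name) (.seq t s) := by
    intro π hπ
    have hfixA : ∀ a ∈ t.dom, π • a = a := fun a ha => hπ a (by simp [ha])
    have hfixB : ∀ a ∈ s.cod, π • a = a := fun a ha => hπ a (by simp [ha])
    refine NEq.trans (StmtAux.key (.seq t s) ⟨ht, hs, hc⟩ π) ?_
    refine NEq.trans (NEq.congr_seq (NEq.congr_seq (StmtAux.Linv_fix hfixA)
      (NEq.refl _)) (StmtAux.Lfor_fix hfixB)) ?_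
    exact NEq.trans (NEq.congr_seq (StmtAux.seq_idl rfl) (NEq.refl _))
      (StmtAux.seq_idr rfl)
  refine ⟨hTS, Set.sInter_subset_of_mem hTS, ?_⟩
  intro c _ hcA hcB hmem
  have : c ∈ (↑(t.dom ∪ s.cod) : Set Name) := Set.sInter_subset_of_mem hTS hmem
  simp only [Finset.coe_union, Set.mem_union, Finset.mem_coe] at this
  tauto
end
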